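/- The stabilizer of the conic C is transitive on the external points of C: for any vectors v, w ∈ K³ such that −Q(v) and −Q(w) are both nonzero squares in K, there exist a similitude A of Q and a nonzero scalar λ ∈ K with A·v = λ·w. -/

import Mathlib

/-- The quadratic form `Q(x₀,x₁,x₂) = x₀x₁ - x₂²` on `K³`. -/
def quadForm (K : Type*) [CommRing K] (v : Fin 3 → K) : K := v 0 * v 1 - v 2 ^ 2

/-- A matrix `A ∈ GL(3,K)` is a similitude of `Q` if `Q(A·x) = c·Q(x)` for some `c ∈ K*`. -/
def IsSimilitude (K : Type*) [CommRing K] (A : Matrix (Fin 3) (Fin 3) K) : Prop :=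
  IsUnit A ∧ ∃ c : K, c ≠ 0 ∧ ∀ x : Fin 3 → K, quadForm K (A.mulVec x) = c * quadForm K x

section aux
variable {K : Type*} [Field K]

def Umat (t : K) : Matrix (Fin 3) (Fin 3) K := !![1,0,0; t^2,1,2*t; t,0,1]
def Lmat (r : K) : Matrix (Fin 3) (Fin 3) K := !![1,r^2,2*r; 0,1,0; 0,r,1]

lemma umat_mulVec (t : K) (x : Fin 3 → K) :
    (Umat t).mulVec x = ![x 0, t^2 * x 0 + x 1 + 2*t*x 2, t * x 0 + x 2] := by
  funext i
  fin_cases i <;>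
    simp [Umat, Matrix.mulVec, dotProduct, Fin.sum_univ_three]

lemma lmat_mulVec (r : K) (x : Fin 3 → K) :
    (Lmat r).mulVec x = ![x 0 + r^2 * x 1 + 2*r*x 2, x 1, r * x 1 + x 2] := by
  funext i
  fin_cases i <;>
    simp [Lmat, Matrix.mulVec, dotProduct, Fin.sum_univ_three]

lemma quad_U (t : K) (x : Fin 3 → K) :
    quadForm K ((Umat t).mulVec x) = quadForm K x := by
  rw [umat_mulVec]; simp [quadForm]; ring

lemma quad_L (r : K) (x : Fin 3 → K) :
    quadForm K ((Lmat r).mulVec x) = quadForm K x := by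
  rw [lmat_mulVec]; simp [quadForm]; ring

lemma sim_U (t : K) : IsSimilitude K (Umat t) := by
  refine ⟨?_, 1, one_ne_zero, fun x => by rw [quad_U, one_mul]⟩
  rw [Matrix.isUnit_iff_isUnit_det]
  have : (Umat t).det = 1 := by
    simp [Umat, Matrix.det_fin_three]
  rw [this]; exact isUnit_one

lemma sim_L (r : K) : IsSimilitude K (Lmat r) := by
  refine ⟨?_, 1, one_ne_zero, fun x => by rw [quad_L, one_mul]⟩
  rw [Matrix.isUnit_iff_isUnit_det]
  have : (Lmat r).det = 1 := by
    simp [Lmat, Matrix.det_fin_three, Matrix.vecHead, Matrix.vecTail]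
  rw [this]; exact isUnit_one

lemma sim_mul {A B : Matrix (Fin 3) (Fin 3) K} (hA : IsSimilitude K A)
    (hB : IsSimilitude K B) : IsSimilitude K (A * B) := by
  obtain ⟨hAu, c, hc, hcq⟩ := hA
  obtain ⟨hBu, d, hd, hdq⟩ := hB
  refine ⟨hAu.mul hBu, c * d, mul_ne_zero hc hd, fun x => ?_⟩
  rw [← Matrix.mulVec_mulVec, hcq, hdq]; ring

lemma sim_inv {A : Matrix (Fin 3) (Fin 3) K} (hA : IsSimilitude K A) :
    IsSimilitude K A⁻¹ := by
  obtain ⟨hAu, c, hc, hcq⟩ := hA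
  have hdet : IsUnit A.det := (Matrix.isUnit_iff_isUnit_det A).mp hAu
  refine ⟨(Matrix.isUnit_nonsing_inv_iff).mpr hAu, c⁻¹, inv_ne_zero hc, fun x => ?_⟩
  have h := hcq (A⁻¹.mulVec x)
  rw [Matrix.mulVec_mulVec, Matrix.mul_nonsing_inv A hdet, Matrix.one_mulVec] at h
  rw [h, inv_mul_cancel_left₀ hc]

/-- Reduction: a vector with `Q(v) = -s²`, `s ≠ 0`, can be moved to `s • e₃`
by a similitude (assuming char ≠ 2). -/
lemma reduce (h2 : (2:K) ≠ 0) (v : Fin 3 → K) (s : K) (hs : s ≠ 0)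
    (hQ : quadForm K v = -s^2) :
    ∃ A : Matrix (Fin 3) (Fin 3) K, IsSimilitude K A ∧
      ∃ μ : K, μ ≠ 0 ∧ A.mulVec v = μ • ![(0:K),0,1] := by
  have hQ' : v 0 * v 1 - v 2 ^ 2 = -s^2 := hQ
  by_cases ha : v 0 = 0
  · -- v = (0, b, c), c² = s², c ≠ 0
    rw [ha] at hQ'
    have hc2 : v 2 ^ 2 = s ^ 2 := by linear_combination -hQ'
    have hc : v 2 ≠ 0 := by
      intro h
      apply hs
      have : s ^ 2 = 0 := by rw [← hc2, h]; ring
      exact pow_eq_zero_iff (two_ne_zero) |>.mp this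
    refine ⟨Umat (-(v 1)/(2 * v 2)), sim_U _, v 2, hc, ?_⟩
    rw [umat_mulVec, ha]
    funext i; fin_cases i <;> simp <;> field_simp <;> ring
  · -- three-step chain
    set b : K := -s^2 / v 0 with hbdef
    have hab : v 0 * b = -s^2 := by rw [hbdef]; field_simp
    have hb0 : b ≠ 0 := by
      rw [hbdef]
      exact div_ne_zero (neg_ne_zero.mpr (pow_ne_zero 2 hs)) ha
    -- step 1 : kill the last coordinate
    have h1 : (Umat (-(v 2)/(v 0))).mulVec v = ![v 0, b, 0] := by
      rw [umat_mulVec]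
      funext i; fin_cases i
      · simp
      · simp only [Fin.reduceFinMk, Fin.zero_eta, Fin.mk_one, Matrix.cons_val_one, Matrix.head_cons, Matrix.cons_val_zero]
        rw [hbdef]; field_simp; linear_combination hQ'
      · simp only [Fin.reduceFinMk, Fin.zero_eta, Fin.mk_one, Matrix.cons_val_two, Matrix.tail_cons, Matrix.head_cons]
        field_simp
        ring
    -- step 2 : kill the first coordinate
    have h2' : (Lmat (-(v 0)/s)).mulVec ![v 0, b, 0] = ![0, b, s] := by
      rw [lmat_mulVec]
      funext i; fin_cases i
      · simp only [Fin.reduceFinMk, Fin.zero_eta, Fin.mk_one, Matrix.cons_val_zero, Matrix.cons_val_one, Matrix.head_cons,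
          Matrix.cons_val_two, Matrix.tail_cons]
        field_simp
        linear_combination v 0 * hab
      · simp
      · simp only [Fin.reduceFinMk, Fin.zero_eta, Fin.mk_one, Matrix.cons_val_two, Matrix.tail_cons, Matrix.head_cons,
          Matrix.cons_val_one, Matrix.cons_val_zero]
        field_simp
        linear_combination -hab
    -- step 3 : kill the middle coordinate
    have h3 : (Umat (-b/(2*s))).mulVec ![0, b, s] = s • ![(0:K),0,1] := by
      rw [umat_mulVec]
      funext i; fin_cases i
      · simp
      · simp only [Fin.reduceFinMk, Fin.zero_eta, Fin.mk_one, Matrix.cons_val_one, Matrix.head_cons, Matrix.cons_val_zero,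
          Matrix.cons_val_two, Matrix.tail_cons, Pi.smul_apply, smul_eq_mul]
        field_simp
        ring
      · simp
    refine ⟨Umat (-b/(2*s)) * (Lmat (-(v 0)/s) * Umat (-(v 2)/(v 0))),
      sim_mul (sim_U _) (sim_mul (sim_L _) (sim_U _)), s, hs, ?_⟩
    rw [← Matrix.mulVec_mulVec, ← Matrix.mulVec_mulVec, h1, h2', h3]

end aux

/-- The stabilizer of the conic `C` is transitive on the external points of `C`. -/
theorem similitudes_transitive_on_external_points
    (K : Type*) [Field K] [Fintype K] (hodd : Odd (Fintype.card K))
    (v w : Fin 3 → K)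
    (hv0 : -(quadForm K v) ≠ 0) (hv : IsSquare (-(quadForm K v)))
    (hw0 : -(quadForm K w) ≠ 0) (hw : IsSquare (-(quadForm K w))) :
    ∃ A : Matrix (Fin 3) (Fin 3) K, IsSimilitude K A ∧
      ∃ lam : K, lam ≠ 0 ∧ A.mulVec v = lam • w := by
  have h2 : (2:K) ≠ 0 := by
    intro h
    have hchar : ringChar K = 2 := by
      have hdvd : ringChar K ∣ 2 := (ringChar.spec K 2).mp (by exact_mod_cast h)
      rcases (Nat.dvd_prime Nat.prime_two).mp hdvd with h1 | h2
      · exact absurd h1 (CharP.ringChar_ne_one)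
      · exact h2
    have := FiniteField.even_card_iff_char_two.mp hchar
    rw [Nat.odd_iff] at hodd
    omega
  obtain ⟨s, hsv⟩ := hv
  obtain ⟨t, htw⟩ := hw
  have hs : s ≠ 0 := fun h => hv0 (by rw [hsv, h, mul_zero])
  have ht : t ≠ 0 := fun h => hw0 (by rw [htw, h, mul_zero])
  obtain ⟨A, hA, μ, hμ, hAv⟩ := reduce h2 v s hs (by linear_combination -hsv)
  obtain ⟨B, hB, ν, hν, hBw⟩ := reduce h2 w t ht (by linear_combination -htw)
  refine ⟨B⁻¹ * A, sim_mul (sim_inv hB) hA, μ / ν, div_ne_zero hμ hν, ?_⟩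
  have hdetB : IsUnit B.det := (Matrix.isUnit_iff_isUnit_det B).mp hB.1
  rw [← Matrix.mulVec_mulVec, hAv]
  have he3 : μ • ![(0:K),0,1] = B.mulVec ((μ/ν) • w) := by
    rw [Matrix.mulVec_smul, hBw, smul_smul]
    congr 1; field_simp
  rw [he3, Matrix.mulVec_mulVec, Matrix.nonsing_inv_mul B hdetB, Matrix.one_mulVec]
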